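/- Let q be an odd prime power, k ≥ 3, and let G be an arc of F_q^k with |G| ≥ k and a fixed linear order. Then the column space of the matrix M_{|G|−k} (the matrix M_n with n = |G|−k, whose columns are indexed by pairs (A, E) with E ⊆ G of size k and A ⊆ E of size k−2) contains a vector of weight one. -/

import Mathlib

open Finset

variable {F : Type*} [Field F]

/-- An *arc*: every `k`-subset is a set of linearly independent vectors
(hence a basis of `F^k`). -/
def IsArc {k : ℕ} (S : Set (Fin k → F)) : Prop :=
  ∀ T : Finset (Fin k → F), ↑T ⊆ S → T.card = k →
    LinearIndependent F (Subtype.val : {x // x ∈ T} → (Fin k → F))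

/-- The *weight* of a vector: its number of nonzero coordinates. -/
noncomputable def weight {ι : Type*} (w : ι → F) : ℕ := Nat.card {i // w i ≠ 0}

/-- `det(u, C)`: the determinant of the `k × k` matrix whose first row is `u` and whose
remaining rows are the vectors `g i`, `i ∈ C`, listed in increasing order of the index set. -/
noncomputable def detWith {k m : ℕ} (g : Fin m → Fin k → F)
    (u : Fin k → F) (C : Finset (Fin m)) : F :=
  if h : C.card + 1 = k then
    Matrix.det (Matrix.of ((Fin.cons u fun j => g (C.orderEmbOfFin rfl j)) ∘ Fin.cast h.symm))
  else 0

/-- The matrix `M_n` associated to an ordered arc `g : Fin m → (Fin k → F)`. -/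
noncomputable def arcMatrix {k m : ℕ} (g : Fin m → Fin k → F) (n : ℕ) :
    Matrix {C : Finset (Fin m) // C.card = k - 1}
      {AE : Finset (Fin m) × Finset (Fin m) //
        AE.2.card = m - n ∧ AE.1 ⊆ AE.2 ∧ AE.1.card = k - 2} F :=
  fun C AE =>
    if AE.1.1 ⊆ C.1 then ∏ u ∈ Finset.univ \ AE.1.2, detWith g (g u) C.1 else 0

/-- `det(z, Y₁, …, Y_{k-1})`. -/
noncomputable def detRows {k : ℕ} (z : Fin k → F) (Y : Fin (k - 1) → Fin k → F) : F :=
  if h : k - 1 + 1 = k then Matrix.det (Matrix.of ((Fin.cons z Y) ∘ Fin.cast h.symm)) else 0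

/-- `d_A(u,v) = det(u, v, p₁, …, p_{k-2})` for an ordered tuple `A = (p₁, …, p_{k-2})`. -/
noncomputable def dA {k : ℕ} (p : Fin (k - 2) → Fin k → F) (u v : Fin k → F) : F :=
  if h : k - 2 + 1 + 1 = k then
    Matrix.det (Matrix.of ((Fin.cons u (Fin.cons v p)) ∘ Fin.cast h.symm))
  else 0

/-- `f` is a tangent polynomial for the `(k-2)`-subset `A` of the arc `S`:
a product of `t` pairwise linearly independent linear forms whose kernels meet `S` in `A`. -/
def IsTangentPoly {k : ℕ} (t : ℕ) (S A : Set (Fin k → F)) (f : (Fin k → F) → F) : Prop :=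
  ∃ α : Fin t → ((Fin k → F) →ₗ[F] F),
    (∀ i j, i ≠ j → LinearIndependent F ![α i, α j]) ∧
    (∀ i, S ∩ {x | α i x = 0} = A) ∧
    ∀ x, f x = ∏ i, α i x

/-- Compatible families `(α_A)` (on `(k-2)`-subsets) and `(α_C)` (on `(k-1)`-subsets)
of nonzero scalars, relative to the tangent polynomials `f`. -/
def CompatibleFamilies {k m : ℕ} (t : ℕ) (g : Fin m → Fin k → F)
    (f : Finset (Fin m) → (Fin k → F) → F) (a c : Finset (Fin m) → F) : Prop :=
  (∀ A : Finset (Fin m), A.card = k - 2 → a A ≠ 0) ∧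
  (∀ C : Finset (Fin m), C.card = k - 1 → c C ≠ 0) ∧
  ∀ A : Finset (Fin m), A.card = k - 2 → ∀ e, e ∉ A →
    c (insert e A) =
      (-1 : F) ^ ((A.filter fun i => e < i).card * (t + 1)) * a A * f A (g e)

/-- The polynomial `φ(Y₁, …, Y_{k-1}) = Σ_C (α_C)^e ∏_{z ∈ E∖C} det(z,Y)/det(z,C)`. -/
noncomputable def phiPoly {k M : ℕ} (e : ℕ) (g : Fin M → Fin k → F)
    (c : Finset (Fin M) → F) (E : Finset (Fin M)) (Y : Fin (k - 1) → Fin k → F) : F :=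
  ∑ C ∈ E.powersetCard (k - 1), (c C) ^ e *
    ∏ z ∈ E \ C, detRows (g z) Y / detWith g (g z) C

/-- `(G, n)` has *Property W*. -/
def PropertyW {k m : ℕ} (g : Fin m → Fin k → F) (n : ℕ) : Prop :=
  ∀ A : Finset (Fin m), A.card = k - 2 →
    ∃ (C : Finset (Fin m)) (Cs : Fin (m - n - k + 1) → Finset (Fin m)),
      C.card = k - 1 ∧ A ⊆ C ∧
      (∀ i, (Cs i).card = k - 1 ∧ A ⊆ Cs i ∧ Cs i ≠ C) ∧
      Function.Injective Cs ∧
      ∀ i, ∃ x, ∀ D : {C : Finset (Fin m) // C.card = k - 1},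
        ((arcMatrix g n).mulVec x) D ≠ 0 ↔ (D.1 = C ∨ D.1 = Cs i)

lemma detWith_eq_zero_of_mem {k m : ℕ} (g : Fin m → Fin k → F) {v : Fin m}
    {C : Finset (Fin m)} (hv : v ∈ C) : detWith g (g v) C = 0 := by
  unfold detWith
  split
  · rename_i h
    obtain ⟨j0, hj0⟩ : ∃ j0 : Fin C.card, C.orderEmbOfFin rfl j0 = v := by
      have hr := C.range_orderEmbOfFin (k := C.card) rfl
      have hv' : v ∈ Set.range (C.orderEmbOfFin (k := C.card) rfl) := by
        rw [hr]; exact_mod_cast hv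
      exact hv'
    apply Matrix.det_zero_of_row_eq (i := Fin.cast h 0) (j := Fin.cast h j0.succ)
    · simp [Fin.ext_iff]
    · have e1 : Fin.cast h.symm (Fin.cast h (0 : Fin (C.card + 1))) = 0 := by ext; simp
      have e2 : Fin.cast h.symm (Fin.cast h j0.succ) = j0.succ := by ext; simp
      show ((Fin.cons (g v) fun j => g (C.orderEmbOfFin rfl j)) ∘ Fin.cast h.symm) (Fin.cast h 0)
        = ((Fin.cons (g v) fun j => g (C.orderEmbOfFin rfl j)) ∘ Fin.cast h.symm) (Fin.cast h j0.succ)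
      simp [Function.comp_apply, e1, e2, hj0]
  · rfl


lemma detWith_ne_zero {k m : ℕ} (g : Fin m ↪ (Fin k → F)) (hG : IsArc (Set.range g))
    {u : Fin m} {C : Finset (Fin m)} (h : C.card + 1 = k) (hu : u ∉ C) :
    detWith (⇑g) (g u) C ≠ 0 := by
  classical
  unfold detWith
  rw [dif_pos h]
  set ι : Fin (C.card + 1) → Fin m := Fin.cons u (fun j => C.orderEmbOfFin rfl j) with hι
  have hιinj : Function.Injective ι := by
    intro a b hab
    induction a using Fin.cases with
    | zero =>
      induction b using Fin.cases with
      | zero => rfl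
      | succ j =>
        exfalso; apply hu
        rw [hι] at hab; simp only [Fin.cons_zero, Fin.cons_succ] at hab
        rw [hab]; exact C.orderEmbOfFin_mem rfl j
    | succ i =>
      induction b using Fin.cases with
      | zero =>
        exfalso; apply hu
        rw [hι] at hab; simp only [Fin.cons_zero, Fin.cons_succ] at hab
        rw [← hab]; exact C.orderEmbOfFin_mem rfl i
      | succ j =>
        rw [hι] at hab; simp only [Fin.cons_succ] at hab
        rw [(C.orderEmbOfFin rfl).injective hab]
  have hfι : ∀ a : Fin (C.card + 1),
      ((Fin.cons (g u) fun j => g (C.orderEmbOfFin rfl j) : Fin (C.card + 1) → Fin k → F)) a = g (ι a) := by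
    intro a
    induction a using Fin.cases with
    | zero => simp [hι]
    | succ i => simp [hι]
  set rows : Fin k → (Fin k → F) := fun i => g (ι (Fin.cast h.symm i)) with hrows
  have hrowsinj : Function.Injective rows := by
    intro a b hab
    exact Fin.cast_injective _ (hιinj (g.injective hab))
  set T : Finset (Fin k → F) := Finset.image rows Finset.univ with hT
  have hTsub : ↑T ⊆ Set.range g := by
    intro y hy
    simp only [hT, coe_image, Set.mem_image] at hy
    obtain ⟨i, _, hi⟩ := hy
    exact ⟨_, hi⟩
  have hTcard : T.card = k := by
    rw [hT, Finset.card_image_of_injective _ hrowsinj, card_univ, Fintype.card_fin]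
  have li := hG T hTsub hTcard
  have hmem : ∀ i, rows i ∈ T := fun i => mem_image_of_mem rows (mem_univ i)
  have li2 : LinearIndependent F rows := by
    have := li.comp (fun i => (⟨rows i, hmem i⟩ : {x // x ∈ T}))
      (fun a b hab => hrowsinj (congrArg Subtype.val hab))
    exact this
  have hrowseq : (fun i => Matrix.of
      ((Fin.cons (g u) fun j => g (C.orderEmbOfFin rfl j)) ∘ Fin.cast h.symm) i) = rows := by
    funext i x
    exact congrFun (hfι (Fin.cast h.symm i)) x
  have hu2 : IsUnit (Matrix.of
      ((Fin.cons (g u) fun j => g (C.orderEmbOfFin rfl j)) ∘ Fin.cast h.symm)) := by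
    rw [← Matrix.linearIndependent_rows_iff_isUnit]
    convert li2 using 1; exact hrowseq
  exact ((Matrix.isUnit_iff_isUnit_det _).mp hu2).ne_zero

lemma myTwoNeZero [Fintype F] (hq : Odd (Fintype.card F)) : (2 : F) ≠ 0 := by
  intro h2
  obtain ⟨n, hp, hc⟩ := FiniteField.card F (ringChar F)
  have hdvd : ringChar F ∣ 2 := (CharP.cast_eq_zero_iff F (ringChar F) 2).mp (by exact_mod_cast h2)
  have : ringChar F = 2 := (Nat.prime_dvd_prime_iff_eq hp Nat.prime_two).mp hdvd
  rw [hc, this] at hq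
  rw [Nat.not_even_iff_odd.symm] at hq
  exact hq ((Nat.even_pow).mpr ⟨even_two, n.ne_zero⟩)



theorem stmt18 [Fintype F] {k m : ℕ} (hk : 3 ≤ k)
    (hq : Odd (Fintype.card F))
    (g : Fin m ↪ (Fin k → F)) (hG : IsArc (Set.range g)) (hm : k ≤ m) :
    ∃ x, weight ((arcMatrix (⇑g) (m - k)).mulVec x) = 1 := by
  classical
  have h2 : (2 : F) ≠ 0 := myTwoNeZero hq
  -- the k-set E = {0, ..., k-1} in Fin m
  set E : Finset (Fin m) := Finset.map (Fin.castLEOrderEmb hm).toEmbedding Finset.univ with hE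
  have hmemE : ∀ i : Fin m, i ∈ E ↔ (i : ℕ) < k := by
    intro i
    rw [hE, mem_map]
    constructor
    · rintro ⟨a, -, rfl⟩; exact a.isLt
    · intro hi; exact ⟨⟨(i : ℕ), hi⟩, mem_univ _, by ext; rfl⟩
  have hEk : E.card = k := by rw [hE, card_map, card_univ, Fintype.card_fin]
  -- three distinguished elements
  have h0m : 0 < m := by omega
  have h1m : 1 < m := by omega
  have h2m : 2 < m := by omega
  set e0 : Fin m := ⟨0, h0m⟩ with he0
  set e1 : Fin m := ⟨1, h1m⟩ with he1
  set e2 : Fin m := ⟨2, h2m⟩ with he2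
  have hv0 : (e0 : ℕ) = 0 := rfl
  have hv1 : (e1 : ℕ) = 1 := rfl
  have hv2 : (e2 : ℕ) = 2 := rfl
  have he0E : e0 ∈ E := (hmemE e0).mpr (by omega)
  have he1E : e1 ∈ E := (hmemE e1).mpr (by omega)
  have he2E : e2 ∈ E := (hmemE e2).mpr (by omega)
  have h01 : e0 ≠ e1 := by simp [he0, he1, Fin.ext_iff]
  have h02 : e0 ≠ e2 := by simp [he0, he2, Fin.ext_iff]
  have h12 : e1 ≠ e2 := by simp [he1, he2, Fin.ext_iff]
  -- the three (k-2)-sets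
  set A0 : Finset (Fin m) := E \ {e1, e2} with hA0
  set A1 : Finset (Fin m) := E \ {e0, e2} with hA1
  set A2 : Finset (Fin m) := E \ {e0, e1} with hA2
  have hpair12 : ({e1, e2} : Finset (Fin m)) ⊆ E := by
    intro a ha; rcases mem_insert.mp ha with rfl | ha
    · exact he1E
    · exact (mem_singleton.mp ha) ▸ he2E
  have hpair02 : ({e0, e2} : Finset (Fin m)) ⊆ E := by
    intro a ha; rcases mem_insert.mp ha with rfl | ha
    · exact he0E
    · exact (mem_singleton.mp ha) ▸ he2E
  have hpair01 : ({e0, e1} : Finset (Fin m)) ⊆ E := by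
    intro a ha; rcases mem_insert.mp ha with rfl | ha
    · exact he0E
    · exact (mem_singleton.mp ha) ▸ he1E
  have hcard12 : ({e1, e2} : Finset (Fin m)).card = 2 := card_pair h12
  have hcard02 : ({e0, e2} : Finset (Fin m)).card = 2 := card_pair h02
  have hcard01 : ({e0, e1} : Finset (Fin m)).card = 2 := card_pair h01
  have hA0card : A0.card = k - 2 := by rw [hA0, card_sdiff_of_subset hpair12, hEk, hcard12]
  have hA1card : A1.card = k - 2 := by rw [hA1, card_sdiff_of_subset hpair02, hEk, hcard02]
  have hA2card : A2.card = k - 2 := by rw [hA2, card_sdiff_of_subset hpair01, hEk, hcard01]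
  have hEcard' : E.card = m - (m - k) := by rw [hEk]; omega
  -- the three columns
  set X := {AE : Finset (Fin m) × Finset (Fin m) //
      AE.2.card = m - (m - k) ∧ AE.1 ⊆ AE.2 ∧ AE.1.card = k - 2} with hX
  set c0 : X := ⟨(A0, E), hEcard', sdiff_subset, hA0card⟩ with hc0
  set c1 : X := ⟨(A1, E), hEcard', sdiff_subset, hA1card⟩ with hc1
  set c2 : X := ⟨(A2, E), hEcard', sdiff_subset, hA2card⟩ with hc2
  set x : X → F := Pi.single c1 1 + Pi.single c2 1 - Pi.single c0 1 with hx
  refine ⟨x, ?_⟩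
  set Pr : Finset (Fin m) → F := fun C => ∏ u ∈ Finset.univ \ E, detWith (⇑g) (g u) C with hPr
  set w : {C : Finset (Fin m) // C.card = k - 1} → F := (arcMatrix (⇑g) (m - k)).mulVec x
    with hwdef
  have hw : ∀ C : {C : Finset (Fin m) // C.card = k - 1},
      w C = (if A1 ⊆ C.1 then Pr C.1 else 0) + (if A2 ⊆ C.1 then Pr C.1 else 0)
            - (if A0 ⊆ C.1 then Pr C.1 else 0) := by
    intro C
    rw [hwdef, hx, Matrix.mulVec_sub, Matrix.mulVec_add]
    simp only [Matrix.mulVec_single, mul_one, Pi.add_apply, Pi.sub_apply]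
    simp only [MulOpposite.op_one, one_smul]
    rfl
  -- nonvanishing of Pr on subsets of E
  have hPr_ne : ∀ Cv : Finset (Fin m), Cv ⊆ E → Cv.card = k - 1 → Pr Cv ≠ 0 := by
    intro Cv hsub hcard
    rw [hPr, prod_ne_zero_iff]
    intro u hu
    have huE : u ∉ E := (mem_sdiff.mp hu).2
    exact detWith_ne_zero g hG (by omega) (fun hc => huE (hsub hc))
  have hPr_zero : ∀ Cv : Finset (Fin m), ¬ Cv ⊆ E → Pr Cv = 0 := by
    intro Cv hsub
    obtain ⟨v, hvC, hvE⟩ := not_subset.mp hsub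
    rw [hPr]
    exact prod_eq_zero (mem_sdiff.mpr ⟨mem_univ v, hvE⟩) (detWith_eq_zero_of_mem (⇑g) hvC)
  -- the unique row with nonzero entry
  have hC0card : (E \ {e0}).card = k - 1 := by
    rw [card_sdiff_of_subset (singleton_subset_iff.mpr he0E), hEk, card_singleton]
  set C0 : {C : Finset (Fin m) // C.card = k - 1} := ⟨E \ {e0}, hC0card⟩ with hC0
  -- membership facts
  have he0A0 : e0 ∈ A0 := mem_sdiff.mpr ⟨he0E, by simp [h01, h02]⟩
  have he0A1 : e0 ∉ A1 := fun h => (mem_sdiff.mp h).2 (by simp)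
  have he0A2 : e0 ∉ A2 := fun h => (mem_sdiff.mp h).2 (by simp)
  have he1A0 : e1 ∉ A0 := fun h => (mem_sdiff.mp h).2 (by simp)
  have he1A1 : e1 ∈ A1 := mem_sdiff.mpr ⟨he1E, by simp [h01.symm, h12]⟩
  have he1A2 : e1 ∉ A2 := fun h => (mem_sdiff.mp h).2 (by simp)
  have he2A0 : e2 ∉ A0 := fun h => (mem_sdiff.mp h).2 (by simp)
  have he2A1 : e2 ∉ A1 := fun h => (mem_sdiff.mp h).2 (by simp)
  have he2A2 : e2 ∈ A2 := mem_sdiff.mpr ⟨he2E, by simp [h02.symm, h12.symm]⟩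
  have key : ∀ C : {C : Finset (Fin m) // C.card = k - 1}, w C ≠ 0 ↔ C = C0 := by
    intro C
    rw [hw C]
    by_cases hsub : C.1 ⊆ E
    · have hx1 : (E \ C.1).card = 1 := by rw [card_sdiff_of_subset hsub, hEk, C.2]; omega
      obtain ⟨xx, hxx⟩ := card_eq_one.mp hx1
      have hCeq : C.1 = E \ {xx} := by rw [← hxx]; exact (Finset.sdiff_sdiff_eq_self hsub).symm
      have hxxE : xx ∈ E := by
        have : xx ∈ E \ C.1 := hxx.symm ▸ mem_singleton_self xx
        exact (mem_sdiff.mp this).1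
      have hsubiff : ∀ A : Finset (Fin m), A ⊆ E → (A ⊆ C.1 ↔ xx ∉ A) := by
        intro A hA
        rw [hCeq, subset_sdiff, disjoint_singleton_right]
        exact ⟨fun h => h.2, fun h => ⟨hA, h⟩⟩
      have hCne : xx ≠ e0 → C ≠ C0 := by
        intro hne hCC0
        have he0C : e0 ∈ C.1 := by
          rw [hCeq]; exact mem_sdiff.mpr ⟨he0E, fun h => hne (mem_singleton.mp h).symm⟩
        rw [hCC0, hC0] at he0C
        exact (mem_sdiff.mp he0C).2 (mem_singleton_self e0)
      simp only [hsubiff A1 sdiff_subset, hsubiff A2 sdiff_subset, hsubiff A0 sdiff_subset]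
      by_cases hx0 : xx = e0
      · subst hx0
        rw [if_pos he0A1, if_pos he0A2, if_neg (fun h => h he0A0)]
        have hPrne := hPr_ne C.1 hsub C.2
        constructor
        · intro _; exact Subtype.ext (by rw [hCeq, hC0])
        · intro _
          have : Pr C.1 + Pr C.1 - 0 = 2 * Pr C.1 := by ring
          rw [this]
          exact mul_ne_zero h2 hPrne
      · by_cases hx1' : xx = e1
        · subst hx1'
          rw [if_neg (fun h => h he1A1), if_pos he1A2, if_pos he1A0]
          constructor
          · intro habs; exfalso; apply habs; ring
          · intro hCC0; exact absurd hCC0 (hCne (fun h => h01 h.symm))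
        · by_cases hx2' : xx = e2
          · subst hx2'
            rw [if_pos he2A1, if_neg (fun h => h he2A2), if_pos he2A0]
            constructor
            · intro habs; exfalso; apply habs; ring
            · intro hCC0; exact absurd hCC0 (hCne (fun h => h02 h.symm))
          · have hxA0 : xx ∈ A0 := mem_sdiff.mpr ⟨hxxE, by simp [hx1', hx2']⟩
            have hxA1 : xx ∈ A1 := mem_sdiff.mpr ⟨hxxE, by simp [hx0, hx2']⟩
            have hxA2 : xx ∈ A2 := mem_sdiff.mpr ⟨hxxE, by simp [hx0, hx1']⟩
            rw [if_neg (fun h => h hxA1), if_neg (fun h => h hxA2), if_neg (fun h => h hxA0)]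
            constructor
            · intro habs; exfalso; apply habs; ring
            · intro hCC0; exact absurd hCC0 (hCne hx0)
    · have hz := hPr_zero C.1 hsub
      rw [hz]
      simp only [ite_self]
      constructor
      · intro habs; exfalso; apply habs; ring
      · intro hCC0
        exfalso; apply hsub
        rw [hCC0, hC0]
        exact sdiff_subset
  -- conclude
  show weight w = 1
  rw [weight, Nat.card_eq_one_iff_unique]
  constructor
  · constructor
    intro a b
    apply Subtype.ext
    rw [(key a.1).mp a.2, (key b.1).mp b.2]
  · exact ⟨⟨C0, (key C0).mpr rfl⟩⟩
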